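/- Let ρ be a quantum state on ℂ^d (positive semidefinite with trace 1), let Λ be a d×d matrix with 0 ≤ Λ ≤ I, and suppose Tr{Λ ρ} ≥ 1 − ε for some ε ≥ 0. Then there exists a unitary U on ℂ^d ⊗ ℂ² such that, with the orthogonal projection Π = U† (I_d ⊗ |0⟩⟨0|) U, one has Tr{Π (ρ ⊗ |0⟩⟨0|)} = Tr{Λ ρ} and ‖ ρ ⊗ |0⟩⟨0| − Π (ρ ⊗ |0⟩⟨0|) Π ‖₁ ≤ 2√ε. -/

import Mathlib

open Matrix Kronecker ComplexOrder

/-- The trace norm `‖A‖₁ = Tr √(A† A)` of a complex matrix. -/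
noncomputable def traceNorm {n : Type*} [Fintype n] [DecidableEq n]
    (A : Matrix n n ℂ) : ℝ :=
  ((Matrix.posSemidef_conjTranspose_mul_self A).1.eigenvectorUnitary.1 *
      Matrix.diagonal (((↑) : ℝ → ℂ) ∘ (√·) ∘ (Matrix.posSemidef_conjTranspose_mul_self A).1.eigenvalues) *
      (star (Matrix.posSemidef_conjTranspose_mul_self A).1.eigenvectorUnitary : Matrix n n ℂ)).trace.re

open scoped MatrixOrder

set_option linter.unusedSectionVars false
set_option linter.unusedVariables false
set_option maxHeartbeats 1000000

section Helpers

variable {n : Type*} [Fintype n] [DecidableEq n]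

lemma trace_conjTranspose_mul_eq_sum (X Y : Matrix n n ℂ) :
    (Xᴴ * Y).trace = ∑ p : n × n, (starRingEnd ℂ) (X p.1 p.2) * Y p.1 p.2 := by
  rw [Matrix.trace, Fintype.sum_prod_type]
  simp only [Matrix.diag_apply, Matrix.mul_apply, Matrix.conjTranspose_apply]
  rw [Finset.sum_comm]; rfl

lemma trace_conjTranspose_mul_self_re (X : Matrix n n ℂ) :
    (Xᴴ * X).trace.re = ∑ p : n × n, ‖X p.1 p.2‖ ^ 2 := by
  rw [trace_conjTranspose_mul_eq_sum]
  rw [Complex.re_sum]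
  congr 1; ext p
  rw [Complex.conj_mul']
  norm_cast

lemma abs_trace_le_cs (X Y : Matrix n n ℂ) :
    ‖(Xᴴ * Y).trace‖
      ≤ Real.sqrt ((Xᴴ * X).trace.re) * Real.sqrt ((Yᴴ * Y).trace.re) := by
  let x : EuclideanSpace ℂ (n × n) := WithLp.toLp 2 (fun p : n × n => X p.1 p.2)
  let y : EuclideanSpace ℂ (n × n) := WithLp.toLp 2 (fun p : n × n => Y p.1 p.2)
  have h1 : (Xᴴ * Y).trace = inner (𝕜 := ℂ) x y := by
    rw [trace_conjTranspose_mul_eq_sum, PiLp.inner_apply]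
    simp [x, y, RCLike.inner_apply]
    exact Finset.sum_congr rfl (fun _ _ => mul_comm _ _)
  have hx : Real.sqrt ((Xᴴ * X).trace.re) = ‖x‖ := by
    rw [trace_conjTranspose_mul_self_re, EuclideanSpace.norm_eq]
  have hy : Real.sqrt ((Yᴴ * Y).trace.re) = ‖y‖ := by
    rw [trace_conjTranspose_mul_self_re, EuclideanSpace.norm_eq]
  rw [h1, hx, hy]
  simpa using norm_inner_le_norm (𝕜 := ℂ) x y

lemma psd_trace_nonneg {M : Matrix n n ℂ} (hM : M.PosSemidef) : 0 ≤ M.trace := by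
  rw [Matrix.trace]
  apply Finset.sum_nonneg
  intro i _
  have := hM.diag_nonneg (i := i)
  simpa using this

lemma psd_mul_trace_nonneg {P Q : Matrix n n ℂ} (hP : P.PosSemidef) (hQ : Q.PosSemidef) :
    0 ≤ (P * Q).trace := by
  set S := CFC.sqrt P with hS
  have hSH : Sᴴ = S := (CFC.sqrt_nonneg P).posSemidef.1
  have h2 : (P * Q).trace = (S * Q * Sᴴ).trace := by
    rw [hSH, ← CFC.sqrt_mul_sqrt_self P hP.nonneg, ← hS, mul_assoc, mul_assoc, Matrix.trace_mul_comm,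
      ← mul_assoc]
  rw [h2]
  exact psd_trace_nonneg (hQ.mul_mul_conjTranspose_same S)

/-- Polar-type duality for Hermitian matrices: the trace norm is achieved as
`Re (Tr (W M))` for some unitary `W`. -/
lemma traceNorm_herm_eq {M : Matrix n n ℂ} (hM : M.IsHermitian) :
    ∃ W : Matrix n n ℂ, Wᴴ * W = 1 ∧
      traceNorm M
        = ((W * M).trace).re := by
  classical
  set V : Matrix n n ℂ := (hM.eigenvectorUnitary : Matrix n n ℂ) with hV
  have hV1 : Vᴴ * V = 1 := by
    have := (Matrix.mem_unitaryGroup_iff').mp (hM.eigenvectorUnitary).2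
    simpa [Matrix.star_eq_conjTranspose] using this
  have hV2 : V * Vᴴ = 1 := by
    have := (Matrix.mem_unitaryGroup_iff).mp (hM.eigenvectorUnitary).2
    simpa [Matrix.star_eq_conjTranspose] using this
  set μ : n → ℝ := hM.eigenvalues with hμ
  -- the conjugation-by-V map
  let C : (n → ℝ) → Matrix n n ℂ := fun f =>
    V * (Matrix.diagonal (fun i => (f i : ℂ)) * Vᴴ)
  have hmul : ∀ f g, C f * C g = C (fun i => f i * g i) := by
    intro f g
    show V * (Matrix.diagonal _ * Vᴴ) * (V * (Matrix.diagonal _ * Vᴴ))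
      = V * (Matrix.diagonal _ * Vᴴ)
    have hdd : (Matrix.diagonal (fun i => (f i : ℂ))) * (Matrix.diagonal (fun i => (g i : ℂ)))
        = Matrix.diagonal (fun i => ((f i * g i : ℝ) : ℂ)) := by
      rw [Matrix.diagonal_mul_diagonal]
      congr 1
      funext i
      push_cast
      rfl
    simp only [mul_assoc]
    rw [← mul_assoc Vᴴ V, hV1, one_mul, ← mul_assoc (Matrix.diagonal _) (Matrix.diagonal _), hdd]
  have hconj : ∀ f, (C f)ᴴ = C f := by
    intro f
    show (V * (Matrix.diagonal _ * Vᴴ))ᴴ = _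
    rw [Matrix.conjTranspose_mul, Matrix.conjTranspose_mul, Matrix.conjTranspose_conjTranspose,
      Matrix.diagonal_conjTranspose]
    have hsf : (star fun i => ((f i : ℂ))) = fun i => ((f i : ℂ)) := by
      funext i; simp
    rw [hsf, mul_assoc]
  have hMC : M = C μ := by
    have := hM.spectral_theorem
    simpa [Matrix.star_eq_conjTranspose, Function.comp_def, mul_assoc] using this
  -- the sign unitary
  set s : n → ℝ := fun i => if μ i < 0 then -1 else 1 with hs
  refine ⟨C s, ?_, ?_⟩
  · rw [hconj, hmul]
    have h1 : (fun i => s i * s i) = fun _ => (1 : ℝ) := by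
      funext i; rw [hs]; dsimp only; split <;> norm_num
    rw [h1]
    show V * (Matrix.diagonal _ * Vᴴ) = 1
    have h2 : Matrix.diagonal (fun _ : n => ((1 : ℝ) : ℂ)) = 1 := by
      simp [Matrix.diagonal_one]
    rw [h2, one_mul, hV2]
  · -- W * M = C (|μ|) = sqrt (Mᴴ M)
    have hWM : C s * M = C (fun i => |μ i|) := by
      rw [hMC, hmul]
      have h1 : (fun i => s i * μ i) = fun i => |μ i| := by
        funext i
        rw [hs]; dsimp only
        rcases lt_or_ge (μ i) 0 with h | h
        · rw [if_pos h, abs_of_neg h]; ring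
        · rw [if_neg (not_lt.mpr h), abs_of_nonneg h, one_mul]
      rw [h1]
    have habs_psd : (C (fun i => |μ i|)).PosSemidef := by
      have hd : (Matrix.diagonal (fun i => ((|μ i| : ℝ) : ℂ))).PosSemidef := by
        rw [Matrix.posSemidef_diagonal_iff]
        intro i
        rw [Complex.le_def]
        constructor
        · simpa using abs_nonneg (μ i)
        · simp
      have := hd.mul_mul_conjTranspose_same V
      simpa [mul_assoc] using this
    have hsq : (C (fun i => |μ i|)) ^ 2 = Mᴴ * M := by
      rw [pow_two, hmul, hM.eq, hMC, hmul]
      have h1 : (fun i => |μ i| * |μ i|) = fun i => μ i * μ i := by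
        funext i
        rw [← abs_mul, abs_mul_self]
      rw [h1]
    have hfin : C (fun i => |μ i|) = CFC.sqrt (Mᴴ * M) :=
      (CFC.sqrt_unique ((sq _).symm.trans hsq) habs_psd.nonneg).symm
    have hcfc : CFC.sqrt (Mᴴ * M)
        = (Matrix.posSemidef_conjTranspose_mul_self M).1.cfc Real.sqrt := by
      rw [CFC.sqrt_eq_real_sqrt (Mᴴ * M) (Matrix.posSemidef_conjTranspose_mul_self M).nonneg,
        cfcₙ_eq_cfc (hf0 := Real.sqrt_zero), (Matrix.posSemidef_conjTranspose_mul_self M).1.cfc_eq]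
    rw [hWM, hfin, hcfc]
    unfold traceNorm
    simp only [IsHermitian.cfc, Unitary.conjStarAlgAut_apply]
    rfl

/-- Abstract gentle operator lemma. -/
lemma gentle_abstract (σ τ P : Matrix n n ℂ)
    (hτ : τᴴ = τ) (hττ : τ * τ = σ) (hPH : Pᴴ = P) (hPP : P * P = P)
    (hσtr : σ.trace = 1) (ε : ℝ) (hε : 0 ≤ ε)
    (hPtr : 1 - ε ≤ ((P * σ).trace).re) :
    traceNorm (σ - P * σ * P) ≤ 2 * Real.sqrt ε := by
  have hσpsd : σ.PosSemidef := by
    have := Matrix.posSemidef_conjTranspose_mul_self τ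
    rwa [hτ, hττ] at this
  have hσH : σᴴ = σ := hσpsd.1
  set Q : Matrix n n ℂ := 1 - P with hQ
  have hQH : Qᴴ = Q := by
    rw [hQ, Matrix.conjTranspose_sub, Matrix.conjTranspose_one, hPH]
  have hQQ : Q * Q = Q := by
    rw [hQ, sub_mul, mul_sub, mul_sub, hPP]
    simp only [one_mul, mul_one]
    abel
  have hQpsd : Q.PosSemidef := by
    have := Matrix.posSemidef_conjTranspose_mul_self Q
    rwa [hQH, hQQ] at this
  -- the deficiency
  set t : ℂ := (Q * σ).trace with ht
  have ht0 : 0 ≤ t := psd_mul_trace_nonneg hQpsd hσpsd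
  have ht0' : 0 ≤ t.re := by
    rw [Complex.le_def] at ht0; exact ht0.1
  have htP : t = 1 - (P * σ).trace := by
    rw [ht, hQ, sub_mul, one_mul, Matrix.trace_sub, hσtr]
  have htε : t.re ≤ ε := by
    rw [htP] at *
    simp only [Complex.sub_re, Complex.one_re]
    linarith
  -- Hermitian difference
  have hMH : (σ - P * σ * P).IsHermitian := by
    unfold Matrix.IsHermitian
    rw [Matrix.conjTranspose_sub, hσH, Matrix.conjTranspose_mul, Matrix.conjTranspose_mul,
      hσH, hPH, mul_assoc]
  obtain ⟨W, hW, htn⟩ := traceNorm_herm_eq hMH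
  have hsplit : σ - P * σ * P = Q * σ + P * σ * Q := by
    rw [hQ, sub_mul, one_mul, mul_sub, mul_one]
    abel
  -- trace computations
  -- term 1 : |Tr (W Q σ)| ≤ √(t.re)
  set X1 : Matrix n n ℂ := τ * (Q * Wᴴ) with hX1
  have hX1H : X1ᴴ = W * (Q * τ) := by
    rw [hX1]
    simp only [Matrix.conjTranspose_mul, Matrix.conjTranspose_conjTranspose, hQH, hτ, mul_assoc]
  have hT1eq : (W * (Q * σ)).trace = (X1ᴴ * τ).trace := by
    rw [hX1H, ← hττ]
    simp only [mul_assoc]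
  have hX1X1 : (X1ᴴ * X1).trace = t := by
    rw [hX1H, hX1, ht]
    have e1 : W * (Q * τ) * (τ * (Q * Wᴴ)) = W * ((Q * (τ * (τ * Q))) * Wᴴ) := by
      simp only [mul_assoc]
    rw [e1, Matrix.trace_mul_comm, mul_assoc, hW, mul_one]
    have e2 : Q * (τ * (τ * Q)) = Q * (τ * τ) * Q := by simp only [mul_assoc]
    rw [e2, Matrix.trace_mul_cycle, hQQ, hττ]
  have hττtr : (τᴴ * τ).trace = 1 := by rw [hτ, hττ, hσtr]
  have hT1 : ‖(W * (Q * σ)).trace‖ ≤ Real.sqrt t.re := by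
    rw [hT1eq]
    calc ‖(X1ᴴ * τ).trace‖
        ≤ Real.sqrt ((X1ᴴ * X1).trace.re) * Real.sqrt ((τᴴ * τ).trace.re) :=
          abs_trace_le_cs X1 τ
      _ = Real.sqrt t.re := by rw [hX1X1, hττtr]; simp
  -- term 2 : |Tr (W P σ Q)| ≤ √(t.re)
  set X2 : Matrix n n ℂ := τ * (P * Wᴴ) with hX2
  set Y2 : Matrix n n ℂ := τ * Q with hY2
  have hX2H : X2ᴴ = W * (P * τ) := by
    rw [hX2]
    simp only [Matrix.conjTranspose_mul, Matrix.conjTranspose_conjTranspose, hPH, hτ, mul_assoc]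
  have hT2eq : (W * (P * σ * Q)).trace = (X2ᴴ * Y2).trace := by
    rw [hX2H, hY2, ← hττ]
    simp only [mul_assoc]
  have hX2X2 : (X2ᴴ * X2).trace = 1 - t := by
    rw [hX2H, hX2, htP]
    have e1 : W * (P * τ) * (τ * (P * Wᴴ)) = W * ((P * (τ * (τ * P))) * Wᴴ) := by
      simp only [mul_assoc]
    rw [e1, Matrix.trace_mul_comm, mul_assoc, hW, mul_one]
    have e2 : P * (τ * (τ * P)) = P * (τ * τ) * P := by simp only [mul_assoc]
    rw [e2, Matrix.trace_mul_cycle, hPP, hττ]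
    ring
  have hY2Y2 : (Y2ᴴ * Y2).trace = t := by
    rw [hY2, ht, Matrix.conjTranspose_mul, hQH, hτ]
    have e1 : Q * τ * (τ * Q) = Q * (τ * τ) * Q := by simp only [mul_assoc]
    rw [e1, Matrix.trace_mul_cycle, hQQ, hττ]
  have hT2 : ‖(W * (P * σ * Q)).trace‖ ≤ Real.sqrt t.re := by
    rw [hT2eq]
    calc ‖(X2ᴴ * Y2).trace‖
        ≤ Real.sqrt ((X2ᴴ * X2).trace.re) * Real.sqrt ((Y2ᴴ * Y2).trace.re) :=
          abs_trace_le_cs X2 Y2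
      _ ≤ 1 * Real.sqrt t.re := by
          rw [hX2X2, hY2Y2]
          apply mul_le_mul_of_nonneg_right _ (Real.sqrt_nonneg _)
          rw [show (1:ℝ) = Real.sqrt 1 by rw [Real.sqrt_one]]
          apply Real.sqrt_le_sqrt
          simp only [Complex.sub_re, Complex.one_re]
          linarith
      _ = Real.sqrt t.re := one_mul _
  -- put it together
  have hfinal : traceNorm (σ - P * σ * P) ≤ 2 * Real.sqrt t.re := by
    rw [htn, hsplit, mul_add, Matrix.trace_add]
    have : (W * (Q * σ)).trace.re + (W * (P * σ * Q)).trace.re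
        ≤ Real.sqrt t.re + Real.sqrt t.re := by
      have a1 := (Complex.re_le_norm _).trans hT1
      have a2 := (Complex.re_le_norm _).trans hT2
      linarith
    rw [Complex.add_re]
    linarith
  calc traceNorm (σ - P * σ * P) ≤ 2 * Real.sqrt t.re := hfinal
    _ ≤ 2 * Real.sqrt ε := by
        have := Real.sqrt_le_sqrt htε
        linarith

lemma kron_conjT {m n : Type*} [Fintype m] [Fintype n]
    (X : Matrix m m ℂ) (Y : Matrix n n ℂ) : (X ⊗ₖ Y)ᴴ = Xᴴ ⊗ₖ Yᴴ := by
  ext ⟨i, a⟩ ⟨j, b⟩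
  simp only [Matrix.conjTranspose_apply, Matrix.kroneckerMap_apply, star_mul']

lemma kron_neg {m n : Type*} [Fintype m] [Fintype n]
    (X : Matrix m m ℂ) (Y : Matrix n n ℂ) : X ⊗ₖ (-Y) = -(X ⊗ₖ Y) := by
  ext ⟨i, a⟩ ⟨j, b⟩
  simp [Matrix.kroneckerMap_apply]


end Helpers

/-- **Gentle measurement via a Naimark extension.**
For a quantum state `ρ` and `0 ≤ Λ ≤ I` with `Tr (Λ ρ) ≥ 1 − ε`, `ε ≥ 0`, there is a
unitary `U` on `ℂ^d ⊗ ℂ²` such that the projection `Π = U† (I ⊗ |0⟩⟨0|) U` satisfies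
`Tr (Π (ρ ⊗ |0⟩⟨0|)) = Tr (Λ ρ)` and `‖ρ ⊗ |0⟩⟨0| − Π (ρ ⊗ |0⟩⟨0|) Π‖₁ ≤ 2 √ε`. -/
theorem gentle_naimark {d : ℕ} (ρ Λ : Matrix (Fin d) (Fin d) ℂ)
    (hρ : ρ.PosSemidef) (hρtr : ρ.trace = 1)
    (hΛ : Λ.PosSemidef) (hΛI : ((1 : Matrix (Fin d) (Fin d) ℂ) - Λ).PosSemidef)
    (ε : ℝ) (hε : 0 ≤ ε) (h : 1 - ε ≤ (Λ * ρ).trace.re) :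
    ∃ U : Matrix (Fin d × Fin 2) (Fin d × Fin 2) ℂ,
      Uᴴ * U = 1 ∧ U * Uᴴ = 1 ∧
      ((Uᴴ * ((1 : Matrix (Fin d) (Fin d) ℂ)
            ⊗ₖ Matrix.single (0 : Fin 2) (0 : Fin 2) (1 : ℂ)) * U) *
          (ρ ⊗ₖ Matrix.single (0 : Fin 2) (0 : Fin 2) (1 : ℂ))).trace
        = (Λ * ρ).trace ∧
      traceNorm (ρ ⊗ₖ Matrix.single (0 : Fin 2) (0 : Fin 2) (1 : ℂ)
          - (Uᴴ * ((1 : Matrix (Fin d) (Fin d) ℂ)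
                ⊗ₖ Matrix.single (0 : Fin 2) (0 : Fin 2) (1 : ℂ)) * U) *
              (ρ ⊗ₖ Matrix.single (0 : Fin 2) (0 : Fin 2) (1 : ℂ)) *
              (Uᴴ * ((1 : Matrix (Fin d) (Fin d) ℂ)
                ⊗ₖ Matrix.single (0 : Fin 2) (0 : Fin 2) (1 : ℂ)) * U))
        ≤ 2 * Real.sqrt ε := by
  classical
  have hH : Λ.IsHermitian := hΛ.1
  set V : Matrix (Fin d) (Fin d) ℂ := (hH.eigenvectorUnitary : Matrix (Fin d) (Fin d) ℂ)
    with hVdef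
  have hV1 : Vᴴ * V = 1 := by
    have := (Matrix.mem_unitaryGroup_iff').mp (hH.eigenvectorUnitary).2
    simpa [Matrix.star_eq_conjTranspose] using this
  have hV2 : V * Vᴴ = 1 := by
    have := (Matrix.mem_unitaryGroup_iff).mp (hH.eigenvectorUnitary).2
    simpa [Matrix.star_eq_conjTranspose] using this
  set μ : Fin d → ℝ := hH.eigenvalues with hμdef
  let C : (Fin d → ℝ) → Matrix (Fin d) (Fin d) ℂ := fun f =>
    V * (Matrix.diagonal (fun i => (f i : ℂ)) * Vᴴ)
  have hmul : ∀ f g, C f * C g = C (fun i => f i * g i) := by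
    intro f g
    show V * (Matrix.diagonal _ * Vᴴ) * (V * (Matrix.diagonal _ * Vᴴ))
      = V * (Matrix.diagonal _ * Vᴴ)
    have hdd : (Matrix.diagonal (fun i => (f i : ℂ))) * (Matrix.diagonal (fun i => (g i : ℂ)))
        = Matrix.diagonal (fun i => ((f i * g i : ℝ) : ℂ)) := by
      rw [Matrix.diagonal_mul_diagonal]
      congr 1
      funext i
      push_cast
      rfl
    simp only [mul_assoc]
    rw [← mul_assoc Vᴴ V, hV1, one_mul,
      ← mul_assoc (Matrix.diagonal _) (Matrix.diagonal _), hdd]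
  have hconj : ∀ f, (C f)ᴴ = C f := by
    intro f
    show (V * (Matrix.diagonal _ * Vᴴ))ᴴ = _
    rw [Matrix.conjTranspose_mul, Matrix.conjTranspose_mul, Matrix.conjTranspose_conjTranspose,
      Matrix.diagonal_conjTranspose]
    have hsf : (star fun i => ((f i : ℂ))) = fun i => ((f i : ℂ)) := by
      funext i; simp
    rw [hsf, mul_assoc]
  have hone : C (fun _ => 1) = 1 := by
    show V * (Matrix.diagonal _ * Vᴴ) = 1
    have h2 : Matrix.diagonal (fun _ : Fin d => ((1 : ℝ) : ℂ)) = 1 := by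
      simp [Matrix.diagonal_one]
    rw [h2, one_mul, hV2]
  have hsub : ∀ f g, C f - C g = C (fun i => f i - g i) := by
    intro f g
    show V * (Matrix.diagonal _ * Vᴴ) - V * (Matrix.diagonal _ * Vᴴ)
      = V * (Matrix.diagonal _ * Vᴴ)
    rw [← Matrix.mul_sub, ← Matrix.sub_mul, Matrix.diagonal_sub]
    have e : (fun i => ((f i : ℂ)) - ((g i : ℂ))) = fun i => ((f i - g i : ℝ) : ℂ) := by
      funext i; push_cast; rfl
    rw [e]
  have hΛC : Λ = C μ := by
    have := hH.spectral_theorem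
    simpa [Matrix.star_eq_conjTranspose, Function.comp_def, mul_assoc] using this
  -- eigenvalue bounds
  have hμ0 : ∀ i, 0 ≤ μ i := fun i => hΛ.eigenvalues_nonneg i
  have hμ1 : ∀ i, μ i ≤ 1 := by
    have hdiag : Vᴴ * ((1 : Matrix (Fin d) (Fin d) ℂ) - Λ) * V
        = Matrix.diagonal (fun i => ((1 - μ i : ℝ) : ℂ)) := by
      rw [Matrix.mul_sub, Matrix.sub_mul, mul_one]
      have e1 : Vᴴ * Λ * V = Matrix.diagonal (fun i => ((μ i : ℝ) : ℂ)) := by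
        have := hH.conjStarAlgAut_star_eigenvectorUnitary
        simpa [Matrix.star_eq_conjTranspose, Function.comp_def] using this
      rw [e1, hV1]
      rw [← Matrix.diagonal_one, Matrix.diagonal_sub]
      have e : (fun i => (1 : ℂ) - ((μ i : ℝ) : ℂ)) = fun i => ((1 - μ i : ℝ) : ℂ) := by
        funext i; push_cast; rfl
      rw [e]
    have hpsd := hΛI.conjTranspose_mul_mul_same V
    rw [hdiag] at hpsd
    intro i
    have := Matrix.posSemidef_diagonal_iff.mp hpsd i
    rw [Complex.le_def] at this
    have h1 := this.1
    simp at h1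
    linarith
  -- square roots
  set A : Matrix (Fin d) (Fin d) ℂ := C (fun i => Real.sqrt (μ i)) with hAdef
  set B : Matrix (Fin d) (Fin d) ℂ := C (fun i => Real.sqrt (1 - μ i)) with hBdef
  have hAH : Aᴴ = A := hconj _
  have hBH : Bᴴ = B := hconj _
  have hA2 : A * A = Λ := by
    rw [hAdef, hmul, hΛC]
    have e : (fun i => Real.sqrt (μ i) * Real.sqrt (μ i)) = μ := by
      funext i; exact Real.mul_self_sqrt (hμ0 i)
    rw [e]
  have hB2 : B * B = 1 - Λ := by
    rw [hBdef, hmul, hΛC, ← hone, hsub]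
    have e : (fun i => Real.sqrt (1 - μ i) * Real.sqrt (1 - μ i)) = fun i => 1 - μ i := by
      funext i; exact Real.mul_self_sqrt (by linarith [hμ1 i])
    rw [e]
  have hABBA : A * B = B * A := by
    rw [hAdef, hBdef, hmul, hmul]
    have e : (fun i => Real.sqrt (μ i) * Real.sqrt (1 - μ i))
        = fun i => Real.sqrt (1 - μ i) * Real.sqrt (μ i) := by
      funext i; ring
    rw [e]
  -- 2x2 probe matrices
  set E00 : Matrix (Fin 2) (Fin 2) ℂ := Matrix.single 0 0 1 with hE00def
  set E10 : Matrix (Fin 2) (Fin 2) ℂ := Matrix.single 1 0 1 with hE10def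
  set J : Matrix (Fin 2) (Fin 2) ℂ :=
    Matrix.single 1 0 1 - Matrix.single 0 1 1 with hJdef
  have hE00H : E00ᴴ = E00 := by
    ext i j; fin_cases i <;> fin_cases j <;>
      simp [hE00def, Matrix.single, Matrix.conjTranspose_apply, Matrix.of_apply]
  have hJH : Jᴴ = -J := by
    ext i j; fin_cases i <;> fin_cases j <;>
      simp [hJdef, Matrix.single, Matrix.conjTranspose_apply, Matrix.of_apply]
  have hJJ : J * J = -1 := by
    ext i j; fin_cases i <;> fin_cases j <;>
      simp [hJdef, Matrix.single, Matrix.mul_apply, Fin.sum_univ_two,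
        Matrix.one_apply, Matrix.of_apply]
  have hE00E00 : E00 * E00 = E00 := by
    ext i j; fin_cases i <;> fin_cases j <;>
      simp [hE00def, Matrix.single, Matrix.mul_apply, Fin.sum_univ_two, Matrix.of_apply]
  have hJE00 : J * E00 = E10 := by
    ext i j; fin_cases i <;> fin_cases j <;>
      simp [hJdef, hE00def, hE10def, Matrix.single, Matrix.mul_apply,
        Fin.sum_univ_two, Matrix.of_apply]
  have hE00E10 : E00 * E10 = 0 := by
    ext i j; fin_cases i <;> fin_cases j <;>
      simp [hE00def, hE10def, Matrix.single, Matrix.mul_apply,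
        Fin.sum_univ_two, Matrix.of_apply]
  have htrE00 : E00.trace = 1 := by
    simp [hE00def, Matrix.trace, Fin.sum_univ_two, Matrix.single, Matrix.of_apply]
  have htrE10 : E10.trace = 0 := by
    rw [hE10def, Matrix.trace, Fin.sum_univ_two]
    simp [Matrix.single, Matrix.of_apply, Matrix.diag_apply]
  -- the Naimark unitary
  set U : Matrix (Fin d × Fin 2) (Fin d × Fin 2) ℂ
    := A ⊗ₖ (1 : Matrix (Fin 2) (Fin 2) ℂ) + B ⊗ₖ J with hUdef
  have hUH : Uᴴ = A ⊗ₖ (1 : Matrix (Fin 2) (Fin 2) ℂ) - B ⊗ₖ J := by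
    rw [hUdef, Matrix.conjTranspose_add, kron_conjT, kron_conjT, hAH, hBH, hJH,
      Matrix.conjTranspose_one, kron_neg, ← sub_eq_add_neg]
  have hU1 : Uᴴ * U = 1 := by
    rw [hUH, hUdef, Matrix.sub_mul, Matrix.mul_add, Matrix.mul_add]
    simp only [← Matrix.mul_kronecker_mul, one_mul, mul_one, hA2, hB2, hABBA, hJJ, kron_neg]
    have e : Λ ⊗ₖ (1 : Matrix (Fin 2) (Fin 2) ℂ) + (B * A) ⊗ₖ J
        - ((B * A) ⊗ₖ J + -((1 - Λ) ⊗ₖ (1 : Matrix (Fin 2) (Fin 2) ℂ)))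
        = Λ ⊗ₖ (1 : Matrix (Fin 2) (Fin 2) ℂ) + (1 - Λ) ⊗ₖ (1 : Matrix (Fin 2) (Fin 2) ℂ) := by
      abel
    rw [e, ← Matrix.add_kronecker, add_sub_cancel, Matrix.one_kronecker_one]
  have hU2 : U * Uᴴ = 1 := by
    rw [hUH, hUdef, Matrix.add_mul, Matrix.mul_sub, Matrix.mul_sub]
    simp only [← Matrix.mul_kronecker_mul, one_mul, mul_one, hA2, hB2, hABBA, hJJ, kron_neg]
    have e : Λ ⊗ₖ (1 : Matrix (Fin 2) (Fin 2) ℂ) - (B * A) ⊗ₖ J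
        + ((B * A) ⊗ₖ J - -((1 - Λ) ⊗ₖ (1 : Matrix (Fin 2) (Fin 2) ℂ)))
        = Λ ⊗ₖ (1 : Matrix (Fin 2) (Fin 2) ℂ) + (1 - Λ) ⊗ₖ (1 : Matrix (Fin 2) (Fin 2) ℂ) := by
      abel
    rw [e, ← Matrix.add_kronecker, add_sub_cancel, Matrix.one_kronecker_one]
  refine ⟨U, hU1, hU2, ?_, ?_⟩
  · -- trace identity
    have hstep1 : U * (ρ ⊗ₖ E00) = (A * ρ) ⊗ₖ E00 + (B * ρ) ⊗ₖ E10 := by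
      rw [hUdef, Matrix.add_mul, ← Matrix.mul_kronecker_mul, ← Matrix.mul_kronecker_mul,
        one_mul, hJE00]
    have hstep2 : ((1 : Matrix (Fin d) (Fin d) ℂ) ⊗ₖ E00) * (U * (ρ ⊗ₖ E00))
        = (A * ρ) ⊗ₖ E00 := by
      rw [hstep1, Matrix.mul_add, ← Matrix.mul_kronecker_mul, ← Matrix.mul_kronecker_mul,
        one_mul, one_mul, hE00E00, hE00E10, Matrix.kronecker_zero, add_zero]
    have hstep3 : Uᴴ * (((1 : Matrix (Fin d) (Fin d) ℂ) ⊗ₖ E00) * (U * (ρ ⊗ₖ E00)))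
        = (A * (A * ρ)) ⊗ₖ E00 - (B * (A * ρ)) ⊗ₖ E10 := by
      rw [hstep2, hUH, Matrix.sub_mul, ← Matrix.mul_kronecker_mul, ← Matrix.mul_kronecker_mul,
        one_mul, hJE00]
    calc ((Uᴴ * ((1 : Matrix (Fin d) (Fin d) ℂ) ⊗ₖ E00) * U) * (ρ ⊗ₖ E00)).trace
        = (Uᴴ * (((1 : Matrix (Fin d) (Fin d) ℂ) ⊗ₖ E00) * (U * (ρ ⊗ₖ E00)))).trace := by
          simp only [mul_assoc]
      _ = ((A * (A * ρ)) ⊗ₖ E00 - (B * (A * ρ)) ⊗ₖ E10).trace := by rw [hstep3]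
      _ = (Λ * ρ).trace := by
          rw [Matrix.trace_sub, Matrix.trace_kronecker, Matrix.trace_kronecker,
            htrE00, htrE10, mul_one, mul_zero, sub_zero, ← mul_assoc, hA2]
  · -- trace-norm bound
    set σ : Matrix (Fin d × Fin 2) (Fin d × Fin 2) ℂ := ρ ⊗ₖ E00 with hσdef
    set P : Matrix (Fin d × Fin 2) (Fin d × Fin 2) ℂ
      := Uᴴ * ((1 : Matrix (Fin d) (Fin d) ℂ) ⊗ₖ E00) * U with hPdef
    set τ : Matrix (Fin d × Fin 2) (Fin d × Fin 2) ℂ := CFC.sqrt ρ ⊗ₖ E00 with hτdef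
    have hτH : τᴴ = τ := by
      rw [hτdef, kron_conjT, (CFC.sqrt_nonneg ρ).posSemidef.1.eq, hE00H]
    have hττ : τ * τ = σ := by
      rw [hτdef, hσdef, ← Matrix.mul_kronecker_mul, CFC.sqrt_mul_sqrt_self ρ hρ.nonneg, hE00E00]
    have hkE00H : ((1 : Matrix (Fin d) (Fin d) ℂ) ⊗ₖ E00)ᴴ
        = (1 : Matrix (Fin d) (Fin d) ℂ) ⊗ₖ E00 := by
      rw [kron_conjT, Matrix.conjTranspose_one, hE00H]
    have hkE00sq : ((1 : Matrix (Fin d) (Fin d) ℂ) ⊗ₖ E00)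
        * ((1 : Matrix (Fin d) (Fin d) ℂ) ⊗ₖ E00)
        = (1 : Matrix (Fin d) (Fin d) ℂ) ⊗ₖ E00 := by
      rw [← Matrix.mul_kronecker_mul, one_mul, hE00E00]
    have hPH : Pᴴ = P := by
      rw [hPdef, Matrix.conjTranspose_mul, Matrix.conjTranspose_mul, hkE00H,
        Matrix.conjTranspose_conjTranspose]
      simp only [mul_assoc]
    have hPP : P * P = P := by
      rw [hPdef]
      simp only [mul_assoc]
      rw [← mul_assoc U Uᴴ, hU2, one_mul,
        ← mul_assoc ((1 : Matrix (Fin d) (Fin d) ℂ) ⊗ₖ E00), hkE00sq]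
    have hσtr : σ.trace = 1 := by
      rw [hσdef, Matrix.trace_kronecker, hρtr, htrE00, mul_one]
    have hPσtr : (P * σ).trace = (Λ * ρ).trace := by
      rw [hPdef, hσdef]
      have hstep1 : U * (ρ ⊗ₖ E00) = (A * ρ) ⊗ₖ E00 + (B * ρ) ⊗ₖ E10 := by
        rw [hUdef, Matrix.add_mul, ← Matrix.mul_kronecker_mul, ← Matrix.mul_kronecker_mul,
          one_mul, hJE00]
      have hstep2 : ((1 : Matrix (Fin d) (Fin d) ℂ) ⊗ₖ E00) * (U * (ρ ⊗ₖ E00))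
          = (A * ρ) ⊗ₖ E00 := by
        rw [hstep1, Matrix.mul_add, ← Matrix.mul_kronecker_mul, ← Matrix.mul_kronecker_mul,
          one_mul, one_mul, hE00E00, hE00E10, Matrix.kronecker_zero, add_zero]
      have hstep3 : Uᴴ * (((1 : Matrix (Fin d) (Fin d) ℂ) ⊗ₖ E00) * (U * (ρ ⊗ₖ E00)))
          = (A * (A * ρ)) ⊗ₖ E00 - (B * (A * ρ)) ⊗ₖ E10 := by
        rw [hstep2, hUH, Matrix.sub_mul, ← Matrix.mul_kronecker_mul, ← Matrix.mul_kronecker_mul,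
          one_mul, hJE00]
      calc ((Uᴴ * ((1 : Matrix (Fin d) (Fin d) ℂ) ⊗ₖ E00) * U) * (ρ ⊗ₖ E00)).trace
          = (Uᴴ * (((1 : Matrix (Fin d) (Fin d) ℂ) ⊗ₖ E00) * (U * (ρ ⊗ₖ E00)))).trace := by
            simp only [mul_assoc]
        _ = ((A * (A * ρ)) ⊗ₖ E00 - (B * (A * ρ)) ⊗ₖ E10).trace := by rw [hstep3]
        _ = (Λ * ρ).trace := by
            rw [Matrix.trace_sub, Matrix.trace_kronecker, Matrix.trace_kronecker,
              htrE00, htrE10, mul_one, mul_zero, sub_zero, ← mul_assoc, hA2]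
    have hPtr : 1 - ε ≤ ((P * σ).trace).re := by
      rw [hPσtr]; exact h
    exact gentle_abstract σ τ P hτH hττ hPH hPP hσtr ε hε hPtr
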